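/- (Summability of OOMD increments.) Suppose ψ is differentiable and 1-strongly convex with respect to the 2-norm on Z and η ≤ 1/(8P), and let z* ∈ Z* be any Nash equilibrium. Then for every T ≥ 2 the OOMD iterates satisfy Σ_{t=1}^{T−1} (‖ẑ_{t+1} − z_t‖₂² + ‖z_t − ẑ_t‖₂²) ≤ (32/15) D_ψ(z*, ẑ₁); consequently ‖z_t − ẑ_t‖₂ → 0, ‖z_{t+1} − z_t‖₂ → 0, and ‖ẑ_{t+1} − ẑ_t‖₂ → 0 as t → ∞. -/

import Mathlib

open Finset Filter Topology

noncomputable section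

/-- Squared Euclidean norm on `ℝ^n`. -/
def sqnorm {n : ℕ} (z : Fin n → ℝ) : ℝ := ∑ i, (z i) ^ 2

/-- Euclidean (2-)norm on `ℝ^n`. -/
def norm2 {n : ℕ} (z : Fin n → ℝ) : ℝ := Real.sqrt (sqnorm z)

/-- 1-norm on `ℝ^n`. -/
def norm1 {n : ℕ} (z : Fin n → ℝ) : ℝ := ∑ i, |z i|

/-- Dot product on `ℝ^n`. -/
def dotp {n : ℕ} (a b : Fin n → ℝ) : ℝ := ∑ i, a i * b i

/-- Treeplexes (Hoda et al.): probability simplexes, Cartesian products, and branching. -/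
inductive IsTreeplex : {n : ℕ} → Set (Fin n → ℝ) → Prop
  | simplex (m : ℕ) :
      IsTreeplex {x : Fin (m + 1) → ℝ | (∀ i, 0 ≤ x i) ∧ (∑ i, x i) = 1}
  | prod {m k : ℕ} {S : Set (Fin m → ℝ)} {T : Set (Fin k → ℝ)} :
      IsTreeplex S → IsTreeplex T →
      IsTreeplex {z : Fin (m + k) → ℝ | ∃ u ∈ S, ∃ v ∈ T, z = Fin.append u v}
  | branch {m k : ℕ} {S : Set (Fin m → ℝ)} {T : Set (Fin k → ℝ)} (i : Fin m) :
      IsTreeplex S → IsTreeplex T →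
      IsTreeplex {z : Fin (m + k) → ℝ | ∃ u ∈ S, ∃ v ∈ T,
        z = Fin.append u (fun j => u i * v j)}

/-- A point `z = (x, y)` of the product space `ℝ^M × ℝ^N`. -/
abbrev Pt (M N : ℕ) := (Fin M → ℝ) × (Fin N → ℝ)

def dotPt {M N : ℕ} (a b : Pt M N) : ℝ := dotp a.1 b.1 + dotp a.2 b.2

def sqnormPt {M N : ℕ} (z : Pt M N) : ℝ := sqnorm z.1 + sqnorm z.2

def norm2Pt {M N : ℕ} (z : Pt M N) : ℝ := Real.sqrt (sqnormPt z)

def norm1Pt {M N : ℕ} (z : Pt M N) : ℝ := norm1 z.1 + norm1 z.2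

/-- The game operator `F(z) = (G y, -Gᵀ x)`. -/
def Fop {M N : ℕ} (G : Matrix (Fin M) (Fin N) ℝ) (z : Pt M N) : Pt M N :=
  (G.mulVec z.2, -(G.transpose.mulVec z.1))

/-- Bregman divergence of `ψ` (via the Fréchet derivative). -/
def Dbreg {M N : ℕ} (ψ : Pt M N → ℝ) (u v : Pt M N) : ℝ :=
  ψ u - ψ v - fderiv ℝ ψ v (u - v)

/-- Bregman divergence on a single space. -/
def Dbreg1 {n : ℕ} (ψ : (Fin n → ℝ) → ℝ) (u v : Fin n → ℝ) : ℝ :=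
  ψ u - ψ v - fderiv ℝ ψ v (u - v)

/-- Optimistic online mirror descent with Bregman-divergence function `D`,
step size `η`, iterates `z` and `zh` (the latter is `ẑ`), started from an
arbitrary `ẑ₁ = z₀ ∈ Z`. -/
def IsOOMD {M N : ℕ} (G : Matrix (Fin M) (Fin N) ℝ) (Z : Set (Pt M N))
    (D : Pt M N → Pt M N → ℝ) (η : ℝ) (z zh : ℕ → Pt M N) : Prop :=
  z 0 ∈ Z ∧ zh 1 = z 0 ∧
  (∀ t : ℕ, 1 ≤ t → z t ∈ Z ∧
    ∀ w ∈ Z, η * dotPt (z t) (Fop G (z (t - 1))) + D (z t) (zh t) ≤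
      η * dotPt w (Fop G (z (t - 1))) + D w (zh t)) ∧
  (∀ t : ℕ, 1 ≤ t → zh (t + 1) ∈ Z ∧
    ∀ w ∈ Z, η * dotPt (zh (t + 1)) (Fop G (z t)) + D (zh (t + 1)) (zh t) ≤
      η * dotPt w (Fop G (z t)) + D w (zh t))

def maxPayoff {M N : ℕ} (G : Matrix (Fin M) (Fin N) ℝ) (Y : Set (Fin N → ℝ))
    (x : Fin M → ℝ) : ℝ :=
  sSup ((fun y => dotp x (G.mulVec y)) '' Y)

def minPayoff {M N : ℕ} (G : Matrix (Fin M) (Fin N) ℝ) (X : Set (Fin M → ℝ))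
    (y : Fin N → ℝ) : ℝ :=
  sInf ((fun x => dotp x (G.mulVec y)) '' X)

/-- `X* = argmin_{x ∈ X} max_{y ∈ Y} xᵀGy`. -/
def Xstar {M N : ℕ} (G : Matrix (Fin M) (Fin N) ℝ) (X : Set (Fin M → ℝ))
    (Y : Set (Fin N → ℝ)) : Set (Fin M → ℝ) :=
  {x ∈ X | ∀ x' ∈ X, maxPayoff G Y x ≤ maxPayoff G Y x'}

/-- `Y* = argmax_{y ∈ Y} min_{x ∈ X} xᵀGy`. -/
def Ystar {M N : ℕ} (G : Matrix (Fin M) (Fin N) ℝ) (X : Set (Fin M → ℝ))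
    (Y : Set (Fin N → ℝ)) : Set (Fin N → ℝ) :=
  {y ∈ Y | ∀ y' ∈ Y, minPayoff G X y' ≤ minPayoff G X y}

/-- The set of Nash equilibria `Z* = X* × Y*`. -/
def NashSet {M N : ℕ} (G : Matrix (Fin M) (Fin N) ℝ) (X : Set (Fin M → ℝ))
    (Y : Set (Fin N → ℝ)) : Set (Pt M N) :=
  (Xstar G X Y) ×ˢ (Ystar G X Y)

/-- Generalized KL divergence (Bregman divergence of the vanilla entropy),
with the convention `0 ln 0 = 0`. -/
def KLgen {n : ℕ} (u v : Fin n → ℝ) : ℝ :=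
  ∑ i, (u i * Real.log (u i / v i) - u i + v i)

def KLgenPt {M N : ℕ} (u v : Pt M N) : ℝ := KLgen u.1 v.1 + KLgen u.2 v.2

/-- The combinatorial structure of a treeplex in sequence form: indices `Fin n`,
information sets `Fin K`, the information set `owner i = h(i)` of each index,
and the parent index `parent h = σ(h)` of each information set (`none` for the
root convention `z_{σ(h)} = 1`), with an acyclicity witness. -/
structure TreeplexData (n K : ℕ) where
  owner : Fin n → Fin K
  parent : Fin K → Option (Fin n)
  rank : Fin K → ℕ
  parent_rank : ∀ (h : Fin K) (j : Fin n), parent h = some j → rank (owner j) < rank h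

/-- `z_{σ(h)}`, with the convention that it is `1` when `h` has no parent. -/
def TreeplexData.parentVal {n K : ℕ} (T : TreeplexData n K) (z : Fin n → ℝ) (h : Fin K) : ℝ :=
  (T.parent h).elim 1 z

/-- The treeplex determined by `T`: `z ≥ 0` with `∑_{i ∈ Ω_h} z_i = z_{σ(h)}`. -/
def TreeplexData.set {n K : ℕ} (T : TreeplexData n K) : Set (Fin n → ℝ) :=
  {z | (∀ i, 0 ≤ z i) ∧
    ∀ h : Fin K, (∑ i ∈ Finset.univ.filter (fun i => T.owner i = h), z i) = T.parentVal z h}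

/-- `q_i = z_i / z_{p_i}`. -/
def TreeplexData.q {n K : ℕ} (T : TreeplexData n K) (z : Fin n → ℝ) (i : Fin n) : ℝ :=
  z i / T.parentVal z (T.owner i)

/-- The dilated entropy `Ψ^dil_α(z) = ∑_i α_{h(i)} z_i ln q_i`. -/
def dilEnt {n K : ℕ} (T : TreeplexData n K) (α : Fin K → ℝ) (z : Fin n → ℝ) : ℝ :=
  ∑ i, α (T.owner i) * z i * Real.log (T.q z i)

/-- Bregman divergence of the dilated entropy:
`D(u, z) = ∑_i α_{h(i)} u_i ln(q^u_i / q^z_i)`, with `0 ln 0 = 0`. -/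
def dilEntBreg {n K : ℕ} (T : TreeplexData n K) (α : Fin K → ℝ) (u z : Fin n → ℝ) : ℝ :=
  ∑ i, α (T.owner i) * u i * Real.log (T.q u i / T.q z i)

/-- Coordinates of a pair `z = (x, y)` indexed by `Fin M ⊕ Fin N`. -/
def coordsOf {M N : ℕ} (z : Pt M N) : Fin M ⊕ Fin N → ℝ := Sum.elim z.1 z.2

-- Section 1: basic algebra of sqnorm / dotp / Fop
section Basic

variable {n : ℕ}

lemma sqnorm_nonneg (a : Fin n → ℝ) : 0 ≤ sqnorm a :=
  Finset.sum_nonneg fun i _ => sq_nonneg _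

lemma sqnormPt_nonneg {M N : ℕ} (a : Pt M N) : 0 ≤ sqnormPt a :=
  add_nonneg (sqnorm_nonneg _) (sqnorm_nonneg _)

lemma sqnorm_neg (a : Fin n → ℝ) : sqnorm (-a) = sqnorm a := by
  unfold sqnorm; simp

lemma sqnormPt_sub_comm {M N : ℕ} (a b : Pt M N) : sqnormPt (a - b) = sqnormPt (b - a) := by
  have : b - a = -(a - b) := by abel
  rw [this]; unfold sqnormPt
  have h1 : (-(a-b)).1 = -((a-b).1) := rfl
  have h2 : (-(a-b)).2 = -((a-b).2) := rfl
  rw [h1, h2, sqnorm_neg, sqnorm_neg]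

lemma dotp_sub_left (a b c : Fin n → ℝ) : dotp (a - b) c = dotp a c - dotp b c := by
  unfold dotp; rw [← Finset.sum_sub_distrib]; congr 1; ext i; simp [sub_mul]

lemma dotPt_sub_left {M N : ℕ} (a b c : Pt M N) :
    dotPt (a - b) c = dotPt a c - dotPt b c := by
  unfold dotPt
  simp only [Prod.fst_sub, Prod.snd_sub, dotp_sub_left]; ring

lemma dotp_le_half {γ : ℝ} (hγ : 0 < γ) (a b : Fin n → ℝ) :
    dotp a b ≤ γ / 2 * sqnorm a + 1 / (2 * γ) * sqnorm b := by
  unfold dotp sqnorm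
  rw [Finset.mul_sum, Finset.mul_sum, ← Finset.sum_add_distrib]
  refine Finset.sum_le_sum fun i _ => ?_
  have h := sq_nonneg (γ * a i - b i)
  have h2 : γ * (a i * b i) ≤ γ * (γ / 2 * a i ^ 2 + 1 / (2 * γ) * b i ^ 2) := by
    rw [mul_add]
    have : γ * (1 / (2 * γ) * b i ^ 2) = b i ^ 2 / 2 := by
      field_simp
    rw [this]; nlinarith
  exact le_of_mul_le_mul_left h2 hγ

lemma dotPt_le_half {M N : ℕ} {γ : ℝ} (hγ : 0 < γ) (a b : Pt M N) :
    dotPt a b ≤ γ / 2 * sqnormPt a + 1 / (2 * γ) * sqnormPt b := by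
  unfold dotPt sqnormPt
  have h1 := dotp_le_half hγ a.1 b.1
  have h2 := dotp_le_half hγ a.2 b.2
  ring_nf
  ring_nf at h1 h2
  linarith

lemma sqnorm_add_le (a b : Fin n → ℝ) : sqnorm (a + b) ≤ 2 * sqnorm a + 2 * sqnorm b := by
  unfold sqnorm
  rw [Finset.mul_sum, Finset.mul_sum, ← Finset.sum_add_distrib]
  refine Finset.sum_le_sum fun i _ => ?_
  simp only [Pi.add_apply]
  nlinarith [sq_nonneg (a i - b i)]

lemma sqnormPt_add_le {M N : ℕ} (a b : Pt M N) :
    sqnormPt (a + b) ≤ 2 * sqnormPt a + 2 * sqnormPt b := by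
  unfold sqnormPt
  have h1 := sqnorm_add_le a.1 b.1
  have h2 := sqnorm_add_le a.2 b.2
  simp only [Prod.fst_add, Prod.snd_add]
  linarith

lemma sq_norm1_le (a : Fin n → ℝ) : (norm1 a) ^ 2 ≤ n * sqnorm a := by
  unfold norm1 sqnorm
  have := Finset.sum_mul_sq_le_sq_mul_sq Finset.univ (fun _ => (1:ℝ)) (fun i => |a i|)
  simp only [one_pow, one_mul, Finset.sum_const, Finset.card_univ, Fintype.card_fin,
    nsmul_eq_mul, sq_abs] at this
  linarith

end Basic
-- Fop lemmas
section FopLemmas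

variable {M N : ℕ} (G : Matrix (Fin M) (Fin N) ℝ)

lemma Fop_sub (a b : Pt M N) : Fop G a - Fop G b = Fop G (a - b) := by
  unfold Fop
  ext i <;>
    simp only [Prod.fst_sub, Prod.snd_sub, Pi.sub_apply, Matrix.mulVec, dotProduct,
      Pi.neg_apply, mul_sub] <;> rw [Finset.sum_sub_distrib] <;> ring

lemma sqnorm_mulVec_le {m k : ℕ} (A : Matrix (Fin m) (Fin k) ℝ) (hA : ∀ i j, |A i j| ≤ 1)
    (v : Fin k → ℝ) : sqnorm (A.mulVec v) ≤ (m * k) * sqnorm v := by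
  unfold sqnorm
  have key : ∀ i : Fin m, (A.mulVec v i) ^ 2 ≤ (k : ℝ) * ∑ j, v j ^ 2 := by
    intro i
    have h1 : |A.mulVec v i| ≤ norm1 v := by
      unfold Matrix.mulVec dotProduct norm1
      refine le_trans (Finset.abs_sum_le_sum_abs _ _) ?_
      refine Finset.sum_le_sum fun j _ => ?_
      rw [abs_mul]
      calc |A i j| * |v j| ≤ 1 * |v j| := by
            exact mul_le_mul_of_nonneg_right (hA i j) (abs_nonneg _)
        _ = |v j| := one_mul _
    have h2 : (A.mulVec v i) ^ 2 ≤ (norm1 v) ^ 2 := by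
      rw [← sq_abs]
      exact pow_le_pow_left₀ (abs_nonneg _) h1 2
    exact le_trans h2 (sq_norm1_le v)
  calc ∑ i, (A.mulVec v i) ^ 2 ≤ ∑ _i : Fin m, (k : ℝ) * ∑ j, v j ^ 2 :=
        Finset.sum_le_sum fun i _ => key i
    _ = (m * k) * ∑ j, v j ^ 2 := by
        rw [Finset.sum_const, Finset.card_univ, Fintype.card_fin, nsmul_eq_mul]; ring

lemma sqnormPt_Fop_le (hG : ∀ i j, |G i j| ≤ 1) (w : Pt M N) :
    sqnormPt (Fop G w) ≤ (M * N) * sqnormPt w := by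
  unfold Fop sqnormPt
  have h1 : sqnorm (G.mulVec w.2) ≤ (M * N) * sqnorm w.2 := by
    simpa using sqnorm_mulVec_le G hG w.2
  have h2 : sqnorm (-(G.transpose.mulVec w.1)) ≤ (M * N) * sqnorm w.1 := by
    rw [sqnorm_neg]
    have := sqnorm_mulVec_le G.transpose (fun i j => hG j i) w.1
    simpa [mul_comm] using this
  simp only []
  calc sqnorm (G.mulVec w.2) + sqnorm (-(G.transpose.mulVec w.1))
      ≤ (M * N) * sqnorm w.2 + (M * N) * sqnorm w.1 := add_le_add h1 h2
    _ = (M * N) * (sqnorm w.1 + sqnorm w.2) := by ring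

end FopLemmas
-- Section 3: treeplex structure facts
section Treeplex

lemma comb_append {m k : ℕ} (a b : ℝ) (u1 u2 : Fin m → ℝ) (w1 w2 : Fin k → ℝ) :
    a • Fin.append u1 w1 + b • Fin.append u2 w2
      = Fin.append (a • u1 + b • u2) (a • w1 + b • w2) := by
  ext j
  refine Fin.addCases (fun i => ?_) (fun i => ?_) j <;>
    simp [Fin.append_left, Fin.append_right]

lemma continuous_append_map (m k : ℕ) :
    Continuous (fun p : (Fin m → ℝ) × (Fin k → ℝ) => Fin.append p.1 p.2) := by
  refine continuous_pi fun j => ?_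
  refine Fin.addCases (fun i => ?_) (fun i => ?_) j <;>
    simp only [Fin.append_left, Fin.append_right]
  · exact (continuous_apply i).comp continuous_fst
  · exact (continuous_apply i).comp continuous_snd

lemma continuous_branch_map (m k : ℕ) (i : Fin m) :
    Continuous (fun p : (Fin m → ℝ) × (Fin k → ℝ) =>
      Fin.append p.1 (fun j => p.1 i * p.2 j)) := by
  refine continuous_pi fun j => ?_
  refine Fin.addCases (fun l => ?_) (fun l => ?_) j <;>
    simp only [Fin.append_left, Fin.append_right]
  · exact (continuous_apply l).comp continuous_fst
  · exact ((continuous_apply i).comp continuous_fst).mul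
      ((continuous_apply l).comp continuous_snd)

theorem IsTreeplex.facts {n : ℕ} {S : Set (Fin n → ℝ)} (h : IsTreeplex S) :
    S.Nonempty ∧ Convex ℝ S ∧ IsCompact S ∧ ∀ z ∈ S, ∀ i, 0 ≤ z i ∧ z i ≤ 1 := by
  induction h with
  | simplex m =>
    have hset : {x : Fin (m + 1) → ℝ | (∀ i, 0 ≤ x i) ∧ (∑ i, x i) = 1}
        = stdSimplex ℝ (Fin (m + 1)) := rfl
    refine ⟨⟨fun i => if i = 0 then 1 else 0, fun i => by positivity, by simp⟩, ?_, ?_, ?_⟩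
    · rw [hset]; exact convex_stdSimplex ℝ _
    · rw [hset]; exact isCompact_stdSimplex ℝ _
    · rintro z ⟨h0, h1⟩ i
      refine ⟨h0 i, ?_⟩
      calc z i ≤ ∑ j, z j := Finset.single_le_sum (fun j _ => h0 j) (Finset.mem_univ i)
        _ = 1 := h1
  | prod hS hT ihS ihT =>
    obtain ⟨⟨uS, huS⟩, hcS, hkS, hbS⟩ := ihS
    obtain ⟨⟨uT, huT⟩, hcT, hkT, hbT⟩ := ihT
    rename_i m k S' T'
    have himg : {z : Fin (m + k) → ℝ | ∃ u ∈ S', ∃ v ∈ T', z = Fin.append u v}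
        = (fun p : (Fin m → ℝ) × (Fin k → ℝ) => Fin.append p.1 p.2) '' (S' ×ˢ T') := by
      ext z
      constructor
      · rintro ⟨u, hu, v, hv, rfl⟩; exact ⟨(u, v), ⟨hu, hv⟩, rfl⟩
      · rintro ⟨⟨u, v⟩, ⟨hu, hv⟩, rfl⟩; exact ⟨u, hu, v, hv, rfl⟩
    refine ⟨⟨Fin.append uS uT, uS, huS, uT, huT, rfl⟩, ?_, ?_, ?_⟩
    · rintro z1 ⟨u1, hu1, v1, hv1, rfl⟩ z2 ⟨u2, hu2, v2, hv2, rfl⟩ a b ha hb hab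
      exact ⟨a • u1 + b • u2, hcS hu1 hu2 ha hb hab,
        a • v1 + b • v2, hcT hv1 hv2 ha hb hab, comb_append a b u1 u2 v1 v2⟩
    · rw [himg]
      exact (hkS.prod hkT).image (continuous_append_map m k)
    · rintro z ⟨u, hu, v, hv, rfl⟩ j
      refine Fin.addCases (fun i => ?_) (fun i => ?_) j <;>
        simp only [Fin.append_left, Fin.append_right]
      · exact hbS u hu i
      · exact hbT v hv i
  | branch i hS hT ihS ihT =>
    obtain ⟨⟨uS, huS⟩, hcS, hkS, hbS⟩ := ihS
    obtain ⟨⟨uT, huT⟩, hcT, hkT, hbT⟩ := ihT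
    rename_i m k S' T'
    have himg : {z : Fin (m + k) → ℝ | ∃ u ∈ S', ∃ v ∈ T', z = Fin.append u (fun j => u i * v j)}
        = (fun p : (Fin m → ℝ) × (Fin k → ℝ) =>
            Fin.append p.1 (fun j => p.1 i * p.2 j)) '' (S' ×ˢ T') := by
      ext z
      constructor
      · rintro ⟨u, hu, v, hv, rfl⟩; exact ⟨(u, v), ⟨hu, hv⟩, rfl⟩
      · rintro ⟨⟨u, v⟩, ⟨hu, hv⟩, rfl⟩; exact ⟨u, hu, v, hv, rfl⟩
    refine ⟨⟨Fin.append uS (fun j => uS i * uT j), uS, huS, uT, huT, rfl⟩, ?_, ?_, ?_⟩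
    · rintro z1 ⟨u1, hu1, v1, hv1, rfl⟩ z2 ⟨u2, hu2, v2, hv2, rfl⟩ a b ha hb hab
      have hu' : a • u1 + b • u2 ∈ S' := hcS hu1 hu2 ha hb hab
      have hcomb := comb_append a b u1 u2 (fun j => u1 i * v1 j) (fun j => u2 i * v2 j)
      by_cases h0 : (a • u1 + b • u2) i = 0
      · refine ⟨a • u1 + b • u2, hu', v1, hv1, ?_⟩
        have h1 : 0 ≤ a * u1 i := mul_nonneg ha (hbS u1 hu1 i).1
        have h2 : 0 ≤ b * u2 i := mul_nonneg hb (hbS u2 hu2 i).1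
        have hsum : a * u1 i + b * u2 i = 0 := by
          simpa [Pi.add_apply, Pi.smul_apply, smul_eq_mul] using h0
        have e1 : a * u1 i = 0 := by linarith
        have e2 : b * u2 i = 0 := by linarith
        have hsnd : ((a • fun j => u1 i * v1 j) + b • fun j => u2 i * v2 j)
            = fun j => (a • u1 + b • u2) i * v1 j := by
          funext j
          simp only [Pi.add_apply, Pi.smul_apply, smul_eq_mul]
          have l1 : a * (u1 i * v1 j) = 0 := by rw [← mul_assoc, e1]; ring
          have l2 : b * (u2 i * v2 j) = 0 := by rw [← mul_assoc, e2]; ring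
          rw [l1, l2, hsum]; ring
        rw [hcomb, hsnd]
      · have hpos : 0 < (a • u1 + b • u2) i := by
          have h1 : 0 ≤ a * u1 i := mul_nonneg ha (hbS u1 hu1 i).1
          have h2 : 0 ≤ b * u2 i := mul_nonneg hb (hbS u2 hu2 i).1
          have : (a • u1 + b • u2) i = a * u1 i + b * u2 i := by
            simp [Pi.add_apply, smul_eq_mul]
          rcases lt_or_eq_of_le (by rw [this]; positivity : 0 ≤ (a • u1 + b • u2) i) with h | h
          · exact h
          · exact absurd h.symm h0
        set w := (a • u1 + b • u2) i with hw
        refine ⟨a • u1 + b • u2, hu',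
          (a * u1 i / w) • v1 + (b * u2 i / w) • v2, ?_, ?_⟩
        · refine hcT hv1 hv2 ?_ ?_ ?_
          · exact div_nonneg (mul_nonneg ha (hbS u1 hu1 i).1) hpos.le
          · exact div_nonneg (mul_nonneg hb (hbS u2 hu2 i).1) hpos.le
          · have hww : w = a * u1 i + b * u2 i := by simp [hw, Pi.add_apply, smul_eq_mul]
            rw [← add_div, ← hww]
            exact div_self h0
        · have hsnd : ((a • fun j => u1 i * v1 j) + b • fun j => u2 i * v2 j)
              = fun j => (a • u1 + b • u2) i *
                  ((a * u1 i / w) • v1 + (b * u2 i / w) • v2) j := by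
            funext j
            simp only [Pi.add_apply, Pi.smul_apply, smul_eq_mul, ← hw]
            field_simp
          rw [hcomb, hsnd]
    · rw [himg]
      exact (hkS.prod hkT).image (continuous_branch_map m k i)
    · rintro z ⟨u, hu, v, hv, rfl⟩ j
      refine Fin.addCases (fun l => ?_) (fun l => ?_) j <;>
        simp only [Fin.append_left, Fin.append_right]
      · exact hbS u hu l
      · constructor
        · exact mul_nonneg (hbS u hu i).1 (hbT v hv l).1
        · calc u i * v l ≤ 1 * 1 :=
              mul_le_mul (hbS u hu i).2 (hbT v hv l).2 (hbT v hv l).1 zero_le_one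
            _ = 1 := one_mul 1

end Treeplex
-- Section 4: finite minimax via separation
section FinGame

variable {ι κ : Type} [Fintype ι] [Fintype κ] [Nonempty ι] [Nonempty κ]

lemma minimax_finite (A : ι → κ → ℝ) :
    ∃ a : ι → ℝ, ∃ b : κ → ℝ, a ∈ stdSimplex ℝ ι ∧ b ∈ stdSimplex ℝ κ ∧
      ∀ i j, (∑ j', A i j' * b j') ≤ ∑ i', A i' j * a i' := by
  classical
  set Φ : (κ → ℝ) → (ι → ℝ) := fun b i => ∑ j, A i j * b j with hΦ
  have hΦcont : Continuous Φ := by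
    refine continuous_pi fun i => ?_
    exact continuous_finset_sum _ fun j _ => continuous_const.mul (continuous_apply j)
  have hΦlin : IsLinearMap ℝ Φ := by
    constructor
    · intro b b'; funext i
      simp only [hΦ, Pi.add_apply, mul_add, Finset.sum_add_distrib]
    · intro c b; funext i
      simp only [hΦ, Pi.smul_apply, smul_eq_mul, Finset.mul_sum]
      exact Finset.sum_congr rfl fun j _ => by ring
  have hΔne : (stdSimplex ℝ κ).Nonempty := ⟨Pi.single (Classical.arbitrary κ) 1,
    single_mem_stdSimplex ℝ _⟩
  -- the max-coordinate function
  set φ : (κ → ℝ) → ℝ := fun b => Finset.univ.sup' Finset.univ_nonempty (fun i => Φ b i) with hφ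
  have hφcont : Continuous φ :=
    Continuous.finset_sup'_apply Finset.univ_nonempty
      (fun i _ => (continuous_apply i).comp hΦcont)
  obtain ⟨bbar, hbbar, hbmin⟩ :=
    (isCompact_stdSimplex ℝ κ).exists_isMinOn hΔne hφcont.continuousOn
  set v : ℝ := φ bbar with hv
  -- separation
  set U : Set (ι → ℝ) := {u | ∀ i, u i < v} with hU
  set K : Set (ι → ℝ) := Φ '' stdSimplex ℝ κ with hK
  have hUopen : IsOpen U := by
    have : U = ⋂ i, (fun u : ι → ℝ => u i) ⁻¹' Set.Iio v := by
      ext u; simp [hU, Set.mem_iInter]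
    rw [this]
    exact isOpen_iInter_of_finite fun i => isOpen_Iio.preimage (continuous_apply i)
  have hUconvex : Convex ℝ U := by
    have : U = ⋂ i, {u : ι → ℝ | u i < v} := by ext u; simp [hU, Set.mem_iInter]
    rw [this]
    refine convex_iInter fun i => ?_
    exact convex_halfSpace_lt ⟨fun x y => rfl, fun c x => rfl⟩ v
  have hKconvex : Convex ℝ K := (convex_stdSimplex ℝ κ).is_linear_image hΦlin
  have hdisj : Disjoint U K := by
    rw [Set.disjoint_left]
    rintro u hu ⟨b, hb, rfl⟩
    have h1 : φ b < v := by
      rw [hφ, Finset.sup'_lt_iff]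
      intro i _
      exact hu i
    exact absurd (hbmin hb) (not_le.mpr h1)
  obtain ⟨f, c, hfU, hfK⟩ := geometric_hahn_banach_open hUconvex hUopen hKconvex hdisj
  set e : ι → (ι → ℝ) := fun i => fun j => if i = j then 1 else 0 with he
  set a : ι → ℝ := fun i => f (e i) with ha
  have hrep : ∀ u : ι → ℝ, f u = ∑ i, u i * a i := by
    intro u
    conv_lhs => rw [pi_eq_sum_univ u]
    rw [map_sum]
    exact Finset.sum_congr rfl fun i _ => by rw [map_smul, smul_eq_mul]
  have hconstU : ∀ ε : ℝ, 0 < ε → (fun _ : ι => v - ε) ∈ U := by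
    intro ε hε i; simp [hU]; linarith
  have hanonneg : ∀ i, 0 ≤ a i := by
    intro i
    by_contra hneg
    push_neg at hneg
    set C0 : ℝ := f (fun _ => v - 1) with hC0
    set t : ℝ := max 0 ((c - C0) / (-a i) + 1) with ht
    have ht0 : 0 ≤ t := le_max_left _ _
    have ht1 : (c - C0) / (-a i) + 1 ≤ t := le_max_right _ _
    have hmem : ((fun _ : ι => v - 1) + (-t) • e i) ∈ U := by
      intro j
      simp only [Pi.add_apply, Pi.smul_apply, smul_eq_mul, he]
      by_cases hij : i = j <;> simp [hij] <;> try linarith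
    have hval : f ((fun _ : ι => v - 1) + (-t) • e i) = C0 - t * a i := by
      rw [map_add, map_smul, smul_eq_mul]
      show C0 + (-t) * a i = C0 - t * a i
      ring
    have hlt := hfU _ hmem
    rw [hval] at hlt
    have hai : 0 < -a i := by linarith
    have : (c - C0) ≤ ((c - C0) / (-a i)) * (-a i) := by
      rw [div_mul_cancel₀]; exact ne_of_gt hai
    nlinarith
  have hsumpos : 0 < ∑ i, a i := by
    rcases lt_or_eq_of_le (Finset.sum_nonneg fun i _ => hanonneg i) with h | h
    · exact h
    · exfalso
      have hzero : ∀ i ∈ Finset.univ, a i = 0 :=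
        (Finset.sum_eq_zero_iff_of_nonneg fun i _ => hanonneg i).mp h.symm
      have hf0 : ∀ u, f u = 0 := by
        intro u; rw [hrep]
        exact Finset.sum_eq_zero fun i _ => by rw [hzero i (Finset.mem_univ i), mul_zero]
      have h1 := hfU _ (hconstU 1 one_pos)
      have h2 := hfK (Φ bbar) ⟨bbar, hbbar, rfl⟩
      rw [hf0] at h1 h2
      linarith
  set s : ℝ := ∑ i, a i with hs
  have hsv : s * v ≤ c := by
    by_contra hcon
    push_neg at hcon
    set ε : ℝ := (s * v - c) / (2 * s) with hε
    have hεpos : 0 < ε := by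
      apply div_pos; linarith; linarith
    have := hfU _ (hconstU ε hεpos)
    rw [hrep] at this
    have hsum : ∑ i, (v - ε) * a i = (v - ε) * s := by
      rw [hs, Finset.mul_sum]
    rw [hsum] at this
    have h2 : (v - ε) * s = s * v - ε * s := by ring
    have h3 : ε * s = (s * v - c) / 2 := by
      rw [hε]; field_simp
    nlinarith
  -- the two sides
  have hside1 : ∀ i, (∑ j', A i j' * bbar j') ≤ v := by
    intro i
    rw [hv, hφ]
    exact Finset.le_sup' (fun i => Φ bbar i) (Finset.mem_univ i)
  have hside2 : ∀ j, s * v ≤ ∑ i', A i' j * a i' := by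
    intro j
    set ej : κ → ℝ := fun j' => if j = j' then 1 else 0 with hej
    have hejΔ : ej ∈ stdSimplex ℝ κ := by
      constructor
      · intro j'; by_cases h : j = j' <;> simp [hej, h]
      · simp [hej]
    have hmem : Φ ej ∈ K := ⟨ej, hejΔ, rfl⟩
    have h1 := hfK _ hmem
    rw [hrep] at h1
    have h2 : ∑ i, Φ ej i * a i = ∑ i', A i' j * a i' := by
      refine Finset.sum_congr rfl fun i _ => ?_
      have : Φ ej i = A i j := by
        simp only [hΦ, hej, mul_ite, mul_one, mul_zero]
        simp
      rw [this]
    rw [h2] at h1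
    linarith [hsv]
  refine ⟨fun i => a i / s, bbar, ⟨fun i => div_nonneg (hanonneg i) hsumpos.le, ?_⟩,
    hbbar, ?_⟩
  · rw [← Finset.sum_div, ← hs, div_self (ne_of_gt hsumpos)]
  · intro i j
    have h2 : ∑ i', A i' j * (a i' / s) = (∑ i', A i' j * a i') / s := by
      rw [Finset.sum_div]
      exact Finset.sum_congr rfl fun i' _ => by ring
    rw [h2]
    rw [le_div_iff₀ hsumpos]
    calc (∑ j', A i j' * bbar j') * s ≤ v * s :=
          mul_le_mul_of_nonneg_right (hside1 i) hsumpos.le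
      _ ≤ ∑ i', A i' j * a i' := by rw [mul_comm]; exact hside2 j

end FinGame
-- Section 5: bilinear payoff helpers and nets
section PayoffHelpers

variable {M N : ℕ}

lemma abs_dotp_le {n : ℕ} (a b : Fin n → ℝ) {Ca Cb : ℝ} (ha : ∀ i, |a i| ≤ Ca)
    (hb : ∀ i, |b i| ≤ Cb) (hCa : 0 ≤ Ca) : |dotp a b| ≤ n * (Ca * Cb) := by
  unfold dotp
  refine le_trans (Finset.abs_sum_le_sum_abs _ _) ?_
  have : ∀ i : Fin n, |a i * b i| ≤ Ca * Cb := by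
    intro i
    rw [abs_mul]
    exact mul_le_mul (ha i) (hb i) (abs_nonneg _) hCa
  calc ∑ i, |a i * b i| ≤ ∑ _i : Fin n, Ca * Cb := Finset.sum_le_sum fun i _ => this i
    _ = n * (Ca * Cb) := by rw [Finset.sum_const, Finset.card_univ, Fintype.card_fin,
          nsmul_eq_mul]

lemma abs_mulVec_le (G : Matrix (Fin M) (Fin N) ℝ) (hG : ∀ i j, |G i j| ≤ 1)
    (v : Fin N → ℝ) {Cv : ℝ} (hv : ∀ j, |v j| ≤ Cv) (hCv : 0 ≤ Cv) (i : Fin M) :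
    |G.mulVec v i| ≤ N * Cv := by
  unfold Matrix.mulVec dotProduct
  refine le_trans (Finset.abs_sum_le_sum_abs _ _) ?_
  have : ∀ j : Fin N, |G i j * v j| ≤ Cv := by
    intro j
    rw [abs_mul]
    calc |G i j| * |v j| ≤ 1 * Cv := mul_le_mul (hG i j) (hv j) (abs_nonneg _) zero_le_one
      _ = Cv := one_mul _
  calc ∑ j, |G i j * v j| ≤ ∑ _j : Fin N, Cv := Finset.sum_le_sum fun j _ => this j
    _ = N * Cv := by rw [Finset.sum_const, Finset.card_univ, Fintype.card_fin, nsmul_eq_mul]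

-- payoff bounded by M*N for [0,1]-vectors
lemma abs_payoff_le (G : Matrix (Fin M) (Fin N) ℝ) (hG : ∀ i j, |G i j| ≤ 1)
    {x : Fin M → ℝ} {y : Fin N → ℝ} (hx : ∀ i, |x i| ≤ 1) (hy : ∀ j, |y j| ≤ 1) :
    |dotp x (G.mulVec y)| ≤ M * N := by
  have := abs_dotp_le x (G.mulVec y) hx
    (abs_mulVec_le G hG y hy zero_le_one) zero_le_one
  simpa [mul_one] using this

lemma dotp_mulVec_sub_right (G : Matrix (Fin M) (Fin N) ℝ) (x : Fin M → ℝ) (v v' : Fin N → ℝ) :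
    dotp x (G.mulVec v) - dotp x (G.mulVec v') = dotp x (G.mulVec (v - v')) := by
  unfold dotp Matrix.mulVec dotProduct
  rw [← Finset.sum_sub_distrib]
  refine Finset.sum_congr rfl fun i _ => ?_
  rw [← mul_sub, ← Finset.sum_sub_distrib]
  congr 1
  refine Finset.sum_congr rfl fun j _ => ?_
  simp [mul_sub]

lemma payoff_lip_y (G : Matrix (Fin M) (Fin N) ℝ) (hG : ∀ i j, |G i j| ≤ 1)
    {x : Fin M → ℝ} (hx : ∀ i, |x i| ≤ 1) (y y' : Fin N → ℝ) :
    |dotp x (G.mulVec y) - dotp x (G.mulVec y')| ≤ M * N * dist y y' := by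
  rw [dotp_mulVec_sub_right]
  have hsub : ∀ j, |(y - y') j| ≤ dist y y' := by
    intro j
    have := dist_le_pi_dist y y' j
    rwa [Real.dist_eq] at this
  have := abs_dotp_le x (G.mulVec (y - y')) hx
    (abs_mulVec_le G hG (y - y') hsub dist_nonneg) zero_le_one
  calc |dotp x (G.mulVec (y - y'))| ≤ M * (1 * (N * dist y y')) := this
    _ = M * N * dist y y' := by ring

lemma payoff_lip_x (G : Matrix (Fin M) (Fin N) ℝ) (hG : ∀ i j, |G i j| ≤ 1)
    (x x' : Fin M → ℝ) {y : Fin N → ℝ} (hy : ∀ j, |y j| ≤ 1) :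
    |dotp x (G.mulVec y) - dotp x' (G.mulVec y)| ≤ M * N * dist x x' := by
  rw [← dotp_sub_left]
  have hsub : ∀ i, |(x - x') i| ≤ dist x x' := by
    intro i
    have := dist_le_pi_dist x x' i
    rwa [Real.dist_eq] at this
  have := abs_dotp_le (x - x') (G.mulVec y) hsub
    (abs_mulVec_le G hG y hy zero_le_one) dist_nonneg
  calc |dotp (x - x') (G.mulVec y)| ≤ M * (dist x x' * (N * 1)) := this
    _ = M * N * dist x x' := by ring

lemma dotp_finsum_left {n : ℕ} {α : Type*} (t : Finset α) (w : α → ℝ) (x : α → Fin n → ℝ)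
    (u : Fin n → ℝ) :
    dotp (∑ i ∈ t, w i • x i) u = ∑ i ∈ t, w i * dotp (x i) u := by
  unfold dotp
  calc ∑ k, (∑ i ∈ t, w i • x i) k * u k
      = ∑ k, ∑ i ∈ t, w i * (x i k * u k) := by
        refine Finset.sum_congr rfl fun k _ => ?_
        simp only [Finset.sum_apply, Pi.smul_apply, smul_eq_mul, Finset.sum_mul]
        exact Finset.sum_congr rfl fun i _ => by ring
    _ = ∑ i ∈ t, ∑ k, w i * (x i k * u k) := Finset.sum_comm
    _ = ∑ i ∈ t, w i * ∑ k, x i k * u k := by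
        refine Finset.sum_congr rfl fun i _ => ?_
        rw [Finset.mul_sum]

lemma mulVec_finsum {α : Type*} {M N : ℕ} (G : Matrix (Fin M) (Fin N) ℝ)
    (t : Finset α) (w : α → ℝ) (y : α → Fin N → ℝ) (k : Fin M) :
    (G.mulVec (∑ j ∈ t, w j • y j)) k = ∑ j ∈ t, w j * (G.mulVec (y j)) k := by
  unfold Matrix.mulVec dotProduct
  calc ∑ l, G k l * (∑ j ∈ t, w j • y j) l
      = ∑ l, ∑ j ∈ t, w j * (G k l * y j l) := by
        refine Finset.sum_congr rfl fun l _ => ?_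
        simp only [Finset.sum_apply, Pi.smul_apply, smul_eq_mul, Finset.mul_sum]
        exact Finset.sum_congr rfl fun j _ => by ring
    _ = ∑ j ∈ t, ∑ l, w j * (G k l * y j l) := Finset.sum_comm
    _ = ∑ j ∈ t, w j * ∑ l, G k l * y j l := by
        refine Finset.sum_congr rfl fun j _ => ?_
        rw [Finset.mul_sum]

lemma dotp_mulVec_finsum_right {α : Type*} {M N : ℕ} (G : Matrix (Fin M) (Fin N) ℝ)
    (x : Fin M → ℝ) (t : Finset α) (w : α → ℝ) (y : α → Fin N → ℝ) :
    dotp x (G.mulVec (∑ j ∈ t, w j • y j)) = ∑ j ∈ t, w j * dotp x (G.mulVec (y j)) := by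
  unfold dotp
  calc ∑ k, x k * (G.mulVec (∑ j ∈ t, w j • y j)) k
      = ∑ k, ∑ j ∈ t, w j * (x k * (G.mulVec (y j)) k) := by
        refine Finset.sum_congr rfl fun k _ => ?_
        rw [mulVec_finsum, Finset.mul_sum]
        exact Finset.sum_congr rfl fun j _ => by ring
    _ = ∑ j ∈ t, ∑ k, w j * (x k * (G.mulVec (y j)) k) := Finset.sum_comm
    _ = ∑ j ∈ t, w j * ∑ k, x k * (G.mulVec (y j)) k := by
        refine Finset.sum_congr rfl fun j _ => ?_
        rw [Finset.mul_sum]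

lemma exists_net {k : ℕ} {W : Set (Fin k → ℝ)} (hk : IsCompact W) (hne : W.Nonempty)
    {δ : ℝ} (hδ : 0 < δ) :
    ∃ F : Set (Fin k → ℝ), F.Finite ∧ F ⊆ W ∧ F.Nonempty ∧
      ∀ w ∈ W, ∃ p ∈ F, dist w p < δ := by
  have hcover : W ⊆ ⋃ x ∈ W, Metric.ball x δ := fun x hx =>
    Set.mem_biUnion hx (Metric.mem_ball_self hδ)
  obtain ⟨F, hFW, hFfin, hFcov⟩ :=
    hk.elim_finite_subcover_image (fun x _ => Metric.isOpen_ball) hcover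
  have hnear : ∀ w ∈ W, ∃ p ∈ F, dist w p < δ := by
    intro w hw
    have := hFcov hw
    simp only [Set.mem_iUnion, Metric.mem_ball, exists_prop] at this
    exact this
  obtain ⟨w, hw⟩ := hne
  obtain ⟨p, hp, _⟩ := hnear w hw
  exact ⟨F, hFfin, hFW, ⟨p, hp⟩, hnear⟩

end PayoffHelpers
-- Section 6: minimax for compact convex sets; Nash gap is nonnegative
section Minimax

variable {M N : ℕ}

theorem nash_minimax (G : Matrix (Fin M) (Fin N) ℝ) (hG : ∀ i j, |G i j| ≤ 1)
    {X : Set (Fin M → ℝ)} {Y : Set (Fin N → ℝ)}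
    (hXne : X.Nonempty) (hXc : Convex ℝ X) (hXk : IsCompact X)
    (hXb : ∀ x ∈ X, ∀ i, 0 ≤ x i ∧ x i ≤ 1)
    (hYne : Y.Nonempty) (hYc : Convex ℝ Y) (hYk : IsCompact Y)
    (hYb : ∀ y ∈ Y, ∀ j, 0 ≤ y j ∧ y j ≤ 1)
    {xs : Fin M → ℝ} {ys : Fin N → ℝ}
    (hxs : xs ∈ Xstar G X Y) (hys : ys ∈ Ystar G X Y) :
    maxPayoff G Y xs ≤ minPayoff G X ys := by
  classical
  have habs1 : ∀ x ∈ X, ∀ i, |x i| ≤ 1 := by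
    intro x hx i
    rw [abs_le]
    exact ⟨by linarith [(hXb x hx i).1], (hXb x hx i).2⟩
  have habs2 : ∀ y ∈ Y, ∀ j, |y j| ≤ 1 := by
    intro y hy j
    rw [abs_le]
    exact ⟨by linarith [(hYb y hy j).1], (hYb y hy j).2⟩
  set C : ℝ := M * N with hC
  have hC0 : 0 ≤ C := by positivity
  refine le_of_forall_pos_le_add fun ε hε => ?_
  set δ : ℝ := ε / (2 * C + 1) with hδdef
  have hδ : 0 < δ := by apply div_pos hε; linarith
  obtain ⟨FX, hFXfin, hFXsub, hFXne, hFXnear⟩ := exists_net hXk hXne hδ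
  obtain ⟨FY, hFYfin, hFYsub, hFYne, hFYnear⟩ := exists_net hYk hYne hδ
  haveI iFX : Fintype ↥FX := hFXfin.fintype
  haveI iFY : Fintype ↥FY := hFYfin.fintype
  haveI : Nonempty ↥FX := hFXne.to_subtype
  haveI : Nonempty ↥FY := hFYne.to_subtype
  set A : ↥FY → ↥FX → ℝ := fun j i => dotp i.1 (G.mulVec j.1) with hA
  obtain ⟨a, b, ⟨hapos, hasum⟩, ⟨hbpos, hbsum⟩, hsaddle⟩ := minimax_finite A
  set xbar : Fin M → ℝ := ∑ i : ↥FX, b i • i.1 with hxbar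
  set ybar : Fin N → ℝ := ∑ j : ↥FY, a j • j.1 with hybar
  have hxbarX : xbar ∈ X :=
    hXc.sum_mem (fun i _ => hbpos i) hbsum (fun i _ => hFXsub i.2)
  have hybarY : ybar ∈ Y :=
    hYc.sum_mem (fun j _ => hapos j) hasum (fun j _ => hFYsub j.2)
  -- key inequality from the finite game
  have hkey : ∀ (j : ↥FY) (i : ↥FX),
      dotp xbar (G.mulVec j.1) ≤ dotp i.1 (G.mulVec ybar) := by
    intro j i
    have h1 := hsaddle j i
    have h2 : ∑ j', A j' i * a j' = dotp i.1 (G.mulVec ybar) := by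
      rw [hybar, dotp_mulVec_finsum_right]
      exact Finset.sum_congr rfl fun j' _ => by rw [hA]; ring
    have h3 : ∑ i', A j i' * b i' = dotp xbar (G.mulVec j.1) := by
      rw [hxbar, dotp_finsum_left]
      exact Finset.sum_congr rfl fun i' _ => by rw [hA]; ring
    rw [h2] at h1
    rw [h3] at h1
    exact h1
  -- uniform inequality: ∀ y ∈ Y, x ∈ X : payoff xbar y ≤ payoff x ybar + 2 C δ
  have huniform : ∀ y ∈ Y, ∀ x ∈ X,
      dotp xbar (G.mulVec y) ≤ dotp x (G.mulVec ybar) + 2 * C * δ := by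
    intro y hy x hx
    obtain ⟨p, hpF, hpnear⟩ := hFYnear y hy
    obtain ⟨q, hqF, hqnear⟩ := hFXnear x hx
    have h1 : dotp xbar (G.mulVec y) ≤ dotp xbar (G.mulVec p) + C * δ := by
      have := payoff_lip_y G hG (habs1 xbar hxbarX) y p
      have habs := abs_sub_le_iff.mp this
      have : C * dist y p ≤ C * δ := mul_le_mul_of_nonneg_left hpnear.le hC0
      calc dotp xbar (G.mulVec y) ≤ dotp xbar (G.mulVec p) + C * dist y p := by
            rw [hC]; linarith [habs.1]
        _ ≤ dotp xbar (G.mulVec p) + C * δ := by linarith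
    have h2 : dotp xbar (G.mulVec p) ≤ dotp q (G.mulVec ybar) :=
      hkey ⟨p, hpF⟩ ⟨q, hqF⟩
    have h3 : dotp q (G.mulVec ybar) ≤ dotp x (G.mulVec ybar) + C * δ := by
      have := payoff_lip_x G hG q x (habs2 ybar hybarY)
      have habs := abs_sub_le_iff.mp this
      have hdist : dist q x = dist x q := dist_comm q x
      have : C * dist x q ≤ C * δ := mul_le_mul_of_nonneg_left hqnear.le hC0
      calc dotp q (G.mulVec ybar) ≤ dotp x (G.mulVec ybar) + C * dist q x := by
            rw [hC]; linarith [habs.1]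
        _ ≤ dotp x (G.mulVec ybar) + C * δ := by rw [hdist]; linarith
    linarith
  -- pass to sup/inf
  have hmax_le : maxPayoff G Y xbar ≤ minPayoff G X ybar + 2 * C * δ := by
    unfold maxPayoff
    refine csSup_le (hYne.image _) ?_
    rintro _ ⟨y, hy, rfl⟩
    have hinf : dotp xbar (G.mulVec y) - 2 * C * δ ≤ minPayoff G X ybar := by
      unfold minPayoff
      refine le_csInf (hXne.image _) ?_
      rintro _ ⟨x, hx, rfl⟩
      linarith [huniform y hy x hx]
    linarith
  have hA1 : maxPayoff G Y xs ≤ maxPayoff G Y xbar := hxs.2 xbar hxbarX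
  have hA2 : minPayoff G X ybar ≤ minPayoff G X ys := hys.2 ybar hybarY
  have hfinal : 2 * C * δ ≤ ε := by
    rw [hδdef]
    rw [div_eq_mul_inv]
    have h1 : (2 * C + 1)⁻¹ * (2 * C + 1) = 1 := by
      rw [inv_mul_cancel₀]; positivity
    have h2 : 2 * C * (ε * (2 * C + 1)⁻¹) ≤ (2 * C + 1) * (ε * (2 * C + 1)⁻¹) := by
      apply mul_le_mul_of_nonneg_right (by linarith) (by positivity)
    calc 2 * C * (ε * (2 * C + 1)⁻¹) ≤ (2 * C + 1) * (ε * (2 * C + 1)⁻¹) := h2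
      _ = ε := by field_simp
  linarith

end Minimax
-- Section 7: Bregman divergence identities and the prox variational inequality
section Bregman

variable {M N : ℕ}

lemma dotPt_add_left (a b c : Pt M N) : dotPt (a + b) c = dotPt a c + dotPt b c := by
  unfold dotPt dotp
  simp only [Prod.fst_add, Prod.snd_add, Pi.add_apply, add_mul, Finset.sum_add_distrib]
  ring

lemma dotPt_smul_left (r : ℝ) (a c : Pt M N) : dotPt (r • a) c = r * dotPt a c := by
  unfold dotPt dotp
  simp only [Prod.smul_fst, Prod.smul_snd, Pi.smul_apply, smul_eq_mul, Finset.mul_sum, mul_add]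
  congr 1 <;> exact Finset.sum_congr rfl fun i _ => by ring

noncomputable def linF (g : Pt M N) : Pt M N →L[ℝ] ℝ :=
  LinearMap.toContinuousLinearMap
    { toFun := fun z => dotPt z g
      map_add' := fun a b => dotPt_add_left a b g
      map_smul' := fun r a => by simpa using dotPt_smul_left r a g }

@[simp] lemma linF_apply (g z : Pt M N) : linF g z = dotPt z g := rfl

lemma three_point (ψ : Pt M N → ℝ) (w a b : Pt M N) :
    Dbreg ψ w a - Dbreg ψ w b - Dbreg ψ b a
      = (fderiv ℝ ψ b) (w - b) - (fderiv ℝ ψ a) (w - b) := by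
  unfold Dbreg
  have h : (fderiv ℝ ψ a) (w - a) - (fderiv ℝ ψ a) (b - a) = (fderiv ℝ ψ a) (w - b) := by
    rw [← map_sub]; congr 1; abel
  rw [← h]; ring

lemma bregman_sym (ψ : Pt M N → ℝ) (a b : Pt M N) :
    Dbreg ψ a b + Dbreg ψ b a
      = (fderiv ℝ ψ a) (a - b) - (fderiv ℝ ψ b) (a - b) := by
  unfold Dbreg
  have h : (fderiv ℝ ψ a) (b - a) = -(fderiv ℝ ψ a) (a - b) := by
    rw [← map_neg]; congr 1; abel
  rw [h]; ring

lemma oomd_vi {Z : Set (Pt M N)} (hZc : Convex ℝ Z)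
    (ψ : Pt M N → ℝ) {zh z0 : Pt M N} (hz0 : z0 ∈ Z)
    (hψ : DifferentiableAt ℝ ψ z0) (g : Pt M N) (η : ℝ)
    (hmin : ∀ w ∈ Z, η * dotPt z0 g + Dbreg ψ z0 zh ≤ η * dotPt w g + Dbreg ψ w zh) :
    ∀ w ∈ Z, 0 ≤ η * dotPt (w - z0) g
      + fderiv ℝ ψ z0 (w - z0) - fderiv ℝ ψ zh (w - z0) := by
  intro w hw
  set d : Pt M N := w - z0 with hd
  set O : Pt M N → ℝ := fun z => η * dotPt z g + Dbreg ψ z zh with hO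
  set A : Pt M N →L[ℝ] ℝ := η • linF g + (fderiv ℝ ψ z0 - fderiv ℝ ψ zh) with hA
  have hOderiv : HasFDerivAt O A z0 := by
    have h1 : HasFDerivAt (fun z : Pt M N => η * dotPt z g) (η • linF g) z0 := by
      have := (linF (M := M) (N := N) g).hasFDerivAt (x := z0)
      exact this.const_mul η
    have h2 : HasFDerivAt ψ (fderiv ℝ ψ z0) z0 := hψ.hasFDerivAt
    have h3 : HasFDerivAt (fun z : Pt M N => (fderiv ℝ ψ zh) (z - zh))
        (fderiv ℝ ψ zh) z0 := by
      have heq : (fun z : Pt M N => (fderiv ℝ ψ zh) (z - zh))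
          = fun z => (fderiv ℝ ψ zh) z - (fderiv ℝ ψ zh) zh :=
        funext fun z => map_sub _ z zh
      rw [heq]
      exact ((fderiv ℝ ψ zh).hasFDerivAt (x := z0)).sub_const _
    have : HasFDerivAt (fun z : Pt M N =>
        η * dotPt z g + (ψ z - ψ zh - (fderiv ℝ ψ zh) (z - zh)))
        (η • linF g + (fderiv ℝ ψ z0 - fderiv ℝ ψ zh)) z0 :=
      h1.add ((h2.sub_const (ψ zh)).sub h3)
    exact this
  have hpath : HasDerivAt (fun s : ℝ => z0 + s • d) d 0 := by
    have h1 : HasDerivAt (fun s : ℝ => s • d) ((1:ℝ) • d) 0 :=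
      (hasDerivAt_id (0:ℝ)).smul_const d
    simpa using h1.const_add z0
  have hcomp : HasDerivAt (fun s : ℝ => O (z0 + s • d)) (A d) 0 := by
    have hO' : HasFDerivAt O A ((fun s : ℝ => z0 + s • d) 0) := by simpa using hOderiv
    have := hO'.comp_hasDerivAt (0:ℝ) hpath
    exact this
  have hmono : ∀ s ∈ Set.Ioc (0:ℝ) 1, O z0 ≤ O (z0 + s • d) := by
    intro s hs
    have hmem : z0 + s • d ∈ Z := by
      have heq : z0 + s • (w - z0) = (1 - s) • z0 + s • w := by
        rw [smul_sub, sub_smul, one_smul]; abel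
      rw [hd, heq]
      exact hZc hz0 hw (by linarith [hs.2]) hs.1.le (by ring)
    exact hmin _ hmem
  have hderivW : HasDerivWithinAt (fun s : ℝ => O (z0 + s • d)) (A d) (Set.Ioi 0) 0 :=
    hcomp.hasDerivWithinAt
  rw [hasDerivWithinAt_iff_tendsto_slope] at hderivW
  have hset : (Set.Ioi (0:ℝ)) \ {0} = Set.Ioi 0 :=
    Set.diff_singleton_eq_self (by simp)
  rw [hset] at hderivW
  have hev : ∀ᶠ s in nhdsWithin (0:ℝ) (Set.Ioi 0),
      0 ≤ slope (fun s : ℝ => O (z0 + s • d)) 0 s := by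
    filter_upwards [Ioc_mem_nhdsGT_of_mem (Set.left_mem_Ico.mpr zero_lt_one)] with s hs
    rw [slope_def_field]
    have h1 : O (z0 + (0:ℝ) • d) = O z0 := by norm_num
    have h2 : O z0 ≤ O (z0 + s • d) := hmono s hs
    apply div_nonneg _ (by linarith [hs.1] : (0:ℝ) ≤ s - 0)
    simp only [h1]
    linarith
  have hAd : 0 ≤ A d := ge_of_tendsto hderivW hev
  have hAd_eq : A d = η * dotPt d g + fderiv ℝ ψ z0 d - fderiv ℝ ψ zh d := by
    rw [hA]
    simp [ContinuousLinearMap.add_apply, ContinuousLinearMap.sub_apply,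
      ContinuousLinearMap.smul_apply, smul_eq_mul]
    ring
  rw [hAd_eq] at hAd
  exact hAd

/-- standard prox inequality via the three-point identity -/
lemma oomd_prox_ineq {Z : Set (Pt M N)} (hZc : Convex ℝ Z)
    (ψ : Pt M N → ℝ) {zh z0 : Pt M N} (hz0 : z0 ∈ Z)
    (hψ : DifferentiableAt ℝ ψ z0) (g : Pt M N) (η : ℝ)
    (hmin : ∀ w ∈ Z, η * dotPt z0 g + Dbreg ψ z0 zh ≤ η * dotPt w g + Dbreg ψ w zh) :
    ∀ w ∈ Z, η * dotPt z0 g - η * dotPt w g ≤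
      Dbreg ψ w zh - Dbreg ψ w z0 - Dbreg ψ z0 zh := by
  intro w hw
  have hvi := oomd_vi hZc ψ hz0 hψ g η hmin w hw
  have h3 := three_point ψ w zh z0
  rw [dotPt_sub_left] at hvi
  linarith

end Bregman
-- Section 8: remaining small helpers
section MoreHelpers

variable {M N : ℕ}

lemma dotPt_neg_left (a c : Pt M N) : dotPt (-a) c = -dotPt a c := by
  unfold dotPt dotp
  have h1 : (-a).1 = -(a.1) := rfl
  have h2 : (-a).2 = -(a.2) := rfl
  rw [h1, h2]
  simp only [Pi.neg_apply, neg_mul, Finset.sum_neg_distrib]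
  ring

lemma dotPt_sub_right (a g1 g2 : Pt M N) : dotPt a (g1 - g2) = dotPt a g1 - dotPt a g2 := by
  unfold dotPt dotp
  simp only [Prod.fst_sub, Prod.snd_sub, Pi.sub_apply, mul_sub, Finset.sum_sub_distrib]
  ring

lemma sqnormPt_zero : sqnormPt (0 : Pt M N) = 0 := by
  unfold sqnormPt sqnorm
  simp

lemma dotp_neg_right {n : ℕ} (a b : Fin n → ℝ) : dotp a (-b) = -dotp a b := by
  unfold dotp
  simp [Finset.sum_neg_distrib]

lemma dotp_transpose (G : Matrix (Fin M) (Fin N) ℝ) (a : Fin N → ℝ) (b : Fin M → ℝ) :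
    dotp a (G.transpose.mulVec b) = dotp b (G.mulVec a) := by
  show dotProduct a (G.transpose.mulVec b) = dotProduct b (G.mulVec a)
  rw [Matrix.dotProduct_mulVec, Matrix.vecMul_transpose, dotProduct_comm]

/-- the gap identity for the Nash term -/
lemma nash_gap_identity (G : Matrix (Fin M) (Fin N) ℝ) (w zs : Pt M N) :
    dotPt (w - zs) (Fop G w) =
      dotp w.1 (G.mulVec zs.2) - dotp zs.1 (G.mulVec w.2) := by
  unfold dotPt Fop
  have h1 : (w - zs).1 = w.1 - zs.1 := rfl
  have h2 : (w - zs).2 = w.2 - zs.2 := rfl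
  rw [h1, h2, dotp_sub_left, dotp_sub_left, dotp_neg_right, dotp_neg_right,
    dotp_transpose, dotp_transpose]
  ring

end MoreHelpers

set_option maxHeartbeats 2000000 in
/-- summability of OOMD increments: for OOMD with a differentiable,
1-strongly-convex regularizer and `η ≤ 1/(8P)`, and any Nash equilibrium `z*`, the
sums `∑_{t=1}^{T-1} (‖ẑ_{t+1} − z_t‖₂² + ‖z_t − ẑ_t‖₂²)` are bounded by
`(32/15) D_ψ(z*, ẑ₁)`, and consequently the successive increments tend to `0`. -/
theorem oomd_summable_increments {M N : ℕ}
    (G : Matrix (Fin M) (Fin N) ℝ) (hG : ∀ i j, |G i j| ≤ 1)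
    (X : Set (Fin M → ℝ)) (Y : Set (Fin N → ℝ))
    (hX : IsTreeplex X) (hY : IsTreeplex Y)
    (ψ : Pt M N → ℝ)
    (hdiff : ∀ v ∈ X ×ˢ Y, DifferentiableAt ℝ ψ v)
    (hsc : ∀ u ∈ X ×ˢ Y, ∀ v ∈ X ×ˢ Y, (1 / 2) * sqnormPt (u - v) ≤ Dbreg ψ u v)
    (η : ℝ) (hη : 0 < η) (hηP : η ≤ 1 / (8 * ((M : ℝ) + N)))
    (z zh : ℕ → Pt M N) (hoomd : IsOOMD G (X ×ˢ Y) (Dbreg ψ) η z zh)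
    (zs : Pt M N) (hzs : zs ∈ NashSet G X Y) :
    (∀ T : ℕ, 2 ≤ T →
      (∑ t ∈ Finset.Icc 1 (T - 1),
        (sqnormPt (zh (t + 1) - z t) + sqnormPt (z t - zh t))) ≤
          (32 / 15) * Dbreg ψ zs (zh 1)) ∧
    Tendsto (fun t : ℕ => norm2Pt (z t - zh t)) atTop (𝓝 0) ∧
    Tendsto (fun t : ℕ => norm2Pt (z (t + 1) - z t)) atTop (𝓝 0) ∧
    Tendsto (fun t : ℕ => norm2Pt (zh (t + 1) - zh t)) atTop (𝓝 0) := by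
  classical
  obtain ⟨hXne, hXc, hXk, hXb⟩ := hX.facts
  obtain ⟨hYne, hYc, hYk, hYb⟩ := hY.facts
  set Z : Set (Pt M N) := X ×ˢ Y with hZ
  have hZc : Convex ℝ Z := hXc.prod hYc
  set P : ℝ := (M : ℝ) + N with hPdef
  have hP : 0 < P := by
    rcases eq_or_lt_of_le (by positivity : (0:ℝ) ≤ P) with h | h
    · exfalso
      rw [← h] at hηP
      norm_num at hηP
      linarith
    · exact h
  have hηP' : η * P ≤ 1 / 8 := by
    rw [le_div_iff₀ (by positivity : (0:ℝ) < 8 * P)] at hηP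
    nlinarith
  have hMNP : (M : ℝ) * N ≤ P ^ 2 / 4 := by
    rw [hPdef]; nlinarith [sq_nonneg ((M : ℝ) - N)]
  obtain ⟨hz0mem, hzh1, hstep1, hstep2⟩ := hoomd
  have hzmem : ∀ t : ℕ, 1 ≤ t → z t ∈ Z := fun t ht => (hstep1 t ht).1
  have hzhmem : ∀ t : ℕ, 1 ≤ t → zh t ∈ Z := by
    intro t ht
    rcases Nat.lt_or_ge t 2 with h | h
    · interval_cases t
      · rw [hzh1]; exact hz0mem
    · have h1 : 1 ≤ t - 1 := by omega
      have h2 : (t - 1) + 1 = t := by omega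
      have := (hstep2 (t - 1) h1).1
      rwa [h2] at this
  have hzsZ : zs ∈ Z := ⟨hzs.1.1, hzs.2.1⟩
  have habsX : ∀ x ∈ X, ∀ i, |x i| ≤ 1 := by
    intro x hx i; rw [abs_le]; exact ⟨by linarith [(hXb x hx i).1], (hXb x hx i).2⟩
  have habsY : ∀ y ∈ Y, ∀ j, |y j| ≤ 1 := by
    intro y hy j; rw [abs_le]; exact ⟨by linarith [(hYb y hy j).1], (hYb y hy j).2⟩
  -- Nash term is nonnegative
  have hnash : ∀ w ∈ Z, 0 ≤ dotPt (w - zs) (Fop G w) := by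
    intro w hw
    rw [nash_gap_identity]
    have hminimax := nash_minimax G hG hXne hXc hXk hXb hYne hYc hYk hYb hzs.1 hzs.2
    have h1 : dotp zs.1 (G.mulVec w.2) ≤ maxPayoff G Y zs.1 := by
      unfold maxPayoff
      refine le_csSup ⟨(M : ℝ) * N, ?_⟩ ⟨w.2, hw.2, rfl⟩
      rintro _ ⟨y, hy, rfl⟩
      have := abs_payoff_le G hG (habsX zs.1 hzs.1.1) (habsY y hy)
      exact (abs_le.mp this).2
    have h2 : minPayoff G X zs.2 ≤ dotp w.1 (G.mulVec zs.2) := by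
      unfold minPayoff
      refine csInf_le ⟨-((M : ℝ) * N), ?_⟩ ⟨w.1, hw.1, rfl⟩
      rintro _ ⟨x, hx, rfl⟩
      have := abs_payoff_le G hG (habsX x hx) (habsY zs.2 hzs.2.1)
      exact (abs_le.mp this).1
    linarith
  -- squared increments
  have hDnonneg : ∀ u ∈ Z, ∀ v ∈ Z, 0 ≤ Dbreg ψ u v := by
    intro u hu v hv
    have := hsc u hu v hv
    have h0 := sqnormPt_nonneg (u - v)
    linarith
  -- key one-step inequality
  have hkey : ∀ t : ℕ, 1 ≤ t →
      Dbreg ψ zs (zh (t + 1)) + (1/2) * sqnormPt (zh (t + 1) - z t)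
          + (1/2) * sqnormPt (z t - zh t)
        ≤ Dbreg ψ zs (zh t) + (1/128) * (sqnormPt (z t - zh t)
            + sqnormPt (zh ((t - 1) + 1) - z (t - 1))) := by
    intro t ht
    set g1 : Pt M N := Fop G (z (t - 1)) with hg1
    set g2 : Pt M N := Fop G (z t) with hg2
    have hzt : z t ∈ Z := hzmem t ht
    have hzht : zh t ∈ Z := hzhmem t ht
    have hzht1 : zh (t + 1) ∈ Z := (hstep2 t ht).1
    have hmin1 := (hstep1 t ht).2
    have hmin2 := (hstep2 t ht).2
    set δ : Pt M N := zh (t + 1) - z t with hδ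
    set dv : Pt M N := z (t - 1) - z t with hdv
    set w : Pt M N := Fop G dv with hwdef
    have hgsub : g1 - g2 = w := by rw [hg1, hg2, hwdef, hdv]; exact Fop_sub G _ _
    have hdot_sub : dotPt δ g1 - dotPt δ g2 = dotPt δ w := by
      rw [← hgsub, dotPt_sub_right]
    -- abbreviations for squared norms
    have hsqδ : sqnormPt (z t - zh (t + 1)) = sqnormPt δ := by
      rw [hδ]; exact sqnormPt_sub_comm _ _
    -- contraction : sqnormPt δ ≤ η² ⬝ ‖F dv‖²
    have hv1 := oomd_vi hZc ψ hzt (hdiff (z t) hzt) g1 η hmin1 (zh (t + 1)) hzht1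
    have hv2 := oomd_vi hZc ψ hzht1 (hdiff (zh (t + 1)) hzht1) g2 η hmin2 (z t) hzt
    have hnegδ : z t - zh (t + 1) = -δ := by rw [hδ]; abel
    have cv1 : η * dotPt (z t - zh (t + 1)) g2 = -(η * dotPt δ g2) := by
      rw [hnegδ, dotPt_neg_left]; ring
    have cv2 : fderiv ℝ ψ (zh (t + 1)) (z t - zh (t + 1))
        = -(fderiv ℝ ψ (zh (t + 1)) δ) := by rw [hnegδ, map_neg]
    have cv3 : fderiv ℝ ψ (zh t) (z t - zh (t + 1))
        = -(fderiv ℝ ψ (zh t) δ) := by rw [hnegδ, map_neg]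
    have hsym := bregman_sym ψ (zh (t + 1)) (z t)
    have hscd1 := hsc (zh (t + 1)) hzht1 (z t) hzt
    have hscd2 := hsc (z t) hzt (zh (t + 1)) hzht1
    rw [hsqδ] at hscd2
    have hcontr0 : sqnormPt δ ≤ η * dotPt δ g1 - η * dotPt δ g2 := by
      rw [cv1, cv2, cv3] at hv2
      rw [← hδ] at hsym hscd1
      linarith
    have hsqF := sqnormPt_Fop_le G hG dv
    have hsqD0 := sqnormPt_nonneg dv
    have hsqFP : sqnormPt w ≤ P ^ 2 / 4 * sqnormPt dv := by
      rw [hwdef]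
      calc sqnormPt (Fop G dv) ≤ (M : ℝ) * N * sqnormPt dv := hsqF
        _ ≤ P ^ 2 / 4 * sqnormPt dv := by nlinarith
    have hcontr : sqnormPt δ ≤ η ^ 2 * sqnormPt w := by
      have hd2 := dotPt_le_half (show (0:ℝ) < 1 / η by positivity) δ w
      have he : η * ((1 / η) / 2 * sqnormPt δ + 1 / (2 * (1 / η)) * sqnormPt w)
          = (1/2) * sqnormPt δ + (η ^ 2 / 2) * sqnormPt w := by
        field_simp
      have h3 : η * dotPt δ w ≤ (1/2) * sqnormPt δ + (η ^ 2 / 2) * sqnormPt w := by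
        calc η * dotPt δ w ≤ η * ((1 / η) / 2 * sqnormPt δ + 1 / (2 * (1 / η)) * sqnormPt w) :=
              mul_le_mul_of_nonneg_left hd2 hη.le
          _ = _ := he
      have hds : η * dotPt δ g1 - η * dotPt δ g2 = η * dotPt δ w := by
        rw [← hdot_sub]; ring
      linarith
    have hcontr2 : sqnormPt δ ≤ (1/256) * sqnormPt dv := by
      have h1 : η ^ 2 * sqnormPt w ≤ η ^ 2 * (P ^ 2 / 4 * sqnormPt dv) :=
        mul_le_mul_of_nonneg_left hsqFP (by positivity)
      have h2 : η ^ 2 * (P ^ 2 / 4 * sqnormPt dv) ≤ (1/256) * sqnormPt dv := by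
        have hp2 : η ^ 2 * P ^ 2 ≤ 1 / 64 := by
          have hm := mul_self_le_mul_self (mul_nonneg hη.le hP.le) hηP'
          calc η ^ 2 * P ^ 2 = (η * P) * (η * P) := by ring
            _ ≤ (1/8) * (1/8) := hm
            _ = 1 / 64 := by norm_num
        calc η ^ 2 * (P ^ 2 / 4 * sqnormPt dv) = (η ^ 2 * P ^ 2) * sqnormPt dv / 4 := by ring
          _ ≤ (1/64) * sqnormPt dv / 4 := by
              have := mul_le_mul_of_nonneg_right hp2 hsqD0
              linarith
          _ = (1/256) * sqnormPt dv := by ring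
      linarith
    -- cross term bound
    have hcross : η * dotPt δ w ≤ (1/256) * sqnormPt dv := by
      have hd1 := dotPt_le_half (show (0:ℝ) < 8 * P by positivity) δ w
      have t1 : (8 * P) / 2 * sqnormPt δ ≤ 4 * P * ((1/256) * sqnormPt dv) := by
        have : (8 * P) / 2 * sqnormPt δ = 4 * P * sqnormPt δ := by ring
        rw [this]
        exact mul_le_mul_of_nonneg_left hcontr2 (by positivity)
      have t2 : 1 / (2 * (8 * P)) * sqnormPt w
          ≤ 1 / (16 * P) * (P ^ 2 / 4 * sqnormPt dv) := by
        have e : 1 / (2 * (8 * P)) = 1 / (16 * P) := by ring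
        rw [e]
        exact mul_le_mul_of_nonneg_left hsqFP (by positivity)
      have e3 : 1 / (16 * P) * (P ^ 2 / 4 * sqnormPt dv) = P / 64 * sqnormPt dv := by
        field_simp; ring
      have hd : dotPt δ w ≤ 4 * P * ((1/256) * sqnormPt dv) + P / 64 * sqnormPt dv := by
        rw [← e3]; linarith
      have hd' : dotPt δ w ≤ P / 32 * sqnormPt dv := by
        calc dotPt δ w ≤ 4 * P * ((1/256) * sqnormPt dv) + P / 64 * sqnormPt dv := hd
          _ = P / 64 * sqnormPt dv + P / 64 * sqnormPt dv := by ring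
          _ = P / 32 * sqnormPt dv := by ring
      calc η * dotPt δ w ≤ η * (P / 32 * sqnormPt dv) :=
            mul_le_mul_of_nonneg_left hd' hη.le
        _ = (η * P) * sqnormPt dv / 32 := by ring
        _ ≤ (1/256) * sqnormPt dv := by nlinarith [hsqD0, hηP']
    -- split ‖dv‖² into the two increments
    have hdecomp : dv = (z (t - 1) - zh t) + (zh t - z t) := by rw [hdv]; abel
    have hsplit : sqnormPt dv ≤ 2 * sqnormPt (z (t - 1) - zh t) + 2 * sqnormPt (zh t - z t) := by
      rw [hdecomp]; exact sqnormPt_add_le _ _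
    have e4 : sqnormPt (z (t - 1) - zh t) = sqnormPt (zh ((t - 1) + 1) - z (t - 1)) := by
      have h2 : (t - 1) + 1 = t := by omega
      rw [h2]; exact sqnormPt_sub_comm _ _
    have e5 : sqnormPt (zh t - z t) = sqnormPt (z t - zh t) := sqnormPt_sub_comm _ _
    have hcross2 : η * dotPt δ w ≤ (1/128) * (sqnormPt (z t - zh t)
        + sqnormPt (zh ((t - 1) + 1) - z (t - 1))) := by
      linarith
    -- main assembly
    have hA1 := oomd_prox_ineq hZc ψ hzt (hdiff (z t) hzt) g1 η hmin1 (zh (t + 1)) hzht1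
    have hA2 := oomd_prox_ineq hZc ψ hzht1 (hdiff (zh (t + 1)) hzht1) g2 η hmin2 zs hzsZ
    have hN0 := hnash (z t) hzt
    rw [dotPt_sub_left] at hN0
    rw [← hg2] at hN0
    have hN' : 0 ≤ η * (dotPt (z t) g2 - dotPt zs g2) := mul_nonneg hη.le hN0
    have e6 : η * dotPt δ g1 = η * dotPt (zh (t + 1)) g1 - η * dotPt (z t) g1 := by
      rw [hδ, dotPt_sub_left]; ring
    have e7 : η * dotPt δ g2 = η * dotPt (zh (t + 1)) g2 - η * dotPt (z t) g2 := by
      rw [hδ, dotPt_sub_left]; ring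
    have hdot_sub' : η * dotPt δ g1 - η * dotPt δ g2 = η * dotPt δ w := by
      rw [← hdot_sub]; ring
    have e8 : η * (dotPt (z t) g2 - dotPt zs g2)
        = η * dotPt (z t) g2 - η * dotPt zs g2 := by ring
    have hscd3 := hsc (z t) hzt (zh t) hzht
    linarith
  -- telescoping
  have hQ : ∀ n : ℕ, Dbreg ψ zs (zh (n + 1))
      + (∑ t ∈ Finset.Icc 1 n,
          (63/128) * (sqnormPt (zh (t + 1) - z t) + sqnormPt (z t - zh t)))
      + (1/128) * sqnormPt (zh (n + 1) - z n) ≤ Dbreg ψ zs (zh 1) := by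
    intro n
    induction n with
    | zero =>
      have h0 : zh (0 + 1) - z 0 = 0 := by rw [hzh1]; exact sub_self _
      rw [Finset.Icc_eq_empty (by omega), Finset.sum_empty, h0, sqnormPt_zero]
      norm_num
    | succ n ih =>
      have hk := hkey (n + 1) (by omega)
      have hsub : (n + 1) - 1 = n := by omega
      rw [hsub] at hk
      rw [Finset.sum_Icc_succ_top (by omega : 1 ≤ n + 1)]
      linarith
  have hD0 : 0 ≤ Dbreg ψ zs (zh 1) := hDnonneg zs hzsZ (zh 1) (hzhmem 1 le_rfl)
  have hsumbound : ∀ T : ℕ, 2 ≤ T →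
      (∑ t ∈ Finset.Icc 1 (T - 1),
        (sqnormPt (zh (t + 1) - z t) + sqnormPt (z t - zh t))) ≤
          (32 / 15) * Dbreg ψ zs (zh 1) := by
    intro T hT
    set n := T - 1 with hn
    have hn1 : 1 ≤ n := by omega
    have hq := hQ n
    have hD1 : 0 ≤ Dbreg ψ zs (zh (n + 1)) :=
      hDnonneg zs hzsZ (zh (n + 1)) (hzhmem (n + 1) (by omega))
    have ha0 : 0 ≤ sqnormPt (zh (n + 1) - z n) := sqnormPt_nonneg _
    have hmulsum : (∑ t ∈ Finset.Icc 1 n,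
        (63/128) * (sqnormPt (zh (t + 1) - z t) + sqnormPt (z t - zh t)))
        = (63/128) * ∑ t ∈ Finset.Icc 1 n,
            (sqnormPt (zh (t + 1) - z t) + sqnormPt (z t - zh t)) := by
      rw [Finset.mul_sum]
    rw [hmulsum] at hq
    linarith
  refine ⟨hsumbound, ?_, ?_, ?_⟩
  all_goals {
    have hF : ∀ t : ℕ, (0:ℝ) ≤ sqnormPt (zh (t + 1) - z t) + sqnormPt (z t - zh t) :=
      fun t => add_nonneg (sqnormPt_nonneg _) (sqnormPt_nonneg _)
    have hc : ∀ n : ℕ, ∑ i ∈ Finset.range n,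
        (sqnormPt (zh (i + 1 + 1) - z (i + 1)) + sqnormPt (z (i + 1) - zh (i + 1)))
          ≤ (32 / 15) * Dbreg ψ zs (zh 1) := by
      intro n
      rcases Nat.eq_zero_or_pos n with rfl | hn
      · simp
        positivity
      · have hmain := hsumbound (n + 1) (by omega)
        rw [show (n + 1) - 1 = n from by omega] at hmain
        have hconv : (∑ t ∈ Finset.Icc 1 n,
            (sqnormPt (zh (t + 1) - z t) + sqnormPt (z t - zh t)))
            = ∑ i ∈ Finset.range n,
              (sqnormPt (zh (i + 1 + 1) - z (i + 1)) + sqnormPt (z (i + 1) - zh (i + 1))) := by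
          rw [← Finset.Ico_add_one_right_eq_Icc, Finset.sum_Ico_eq_sum_range]
          rw [show n + 1 - 1 = n from by omega]
          refine Finset.sum_congr rfl fun i _ => ?_
          rw [Nat.add_comm 1 i]
        rw [hconv] at hmain
        exact hmain
    have hsummable : Summable (fun i : ℕ =>
        sqnormPt (zh (i + 1 + 1) - z (i + 1)) + sqnormPt (z (i + 1) - zh (i + 1))) :=
      summable_of_sum_range_le (fun i => hF (i + 1)) hc
    have hF0 : Tendsto (fun i : ℕ =>
        sqnormPt (zh (i + 1 + 1) - z (i + 1)) + sqnormPt (z (i + 1) - zh (i + 1)))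
        atTop (𝓝 0) := hsummable.tendsto_atTop_zero
    have hFt : Tendsto (fun t : ℕ =>
        sqnormPt (zh (t + 1) - z t) + sqnormPt (z t - zh t)) atTop (𝓝 0) :=
      (tendsto_add_atTop_iff_nat 1).mp hF0
    have hbt : Tendsto (fun t : ℕ => sqnormPt (z t - zh t)) atTop (𝓝 0) := by
      refine squeeze_zero (fun t => sqnormPt_nonneg _) (fun t => ?_) hFt
      linarith [sqnormPt_nonneg (zh (t + 1) - z t)]
    have hat : Tendsto (fun t : ℕ => sqnormPt (zh (t + 1) - z t)) atTop (𝓝 0) := by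
      refine squeeze_zero (fun t => sqnormPt_nonneg _) (fun t => ?_) hFt
      linarith [sqnormPt_nonneg (z t - zh t)]
    first
    | · -- goal 1 : ‖z t − ẑ t‖ → 0
        have := hbt.sqrt
        rw [Real.sqrt_zero] at this
        simpa [norm2Pt] using this
    | · -- goal 2 : ‖z (t+1) − z t‖ → 0
        have hbts : Tendsto (fun t : ℕ => sqnormPt (z (t + 1) - zh (t + 1))) atTop (𝓝 0) :=
          (tendsto_add_atTop_iff_nat 1).mpr hbt
        have hbound : ∀ t : ℕ, sqnormPt (z (t + 1) - z t)
            ≤ 2 * sqnormPt (z (t + 1) - zh (t + 1)) + 2 * sqnormPt (zh (t + 1) - z t) := by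
          intro t
          have hdec : z (t + 1) - z t = (z (t + 1) - zh (t + 1)) + (zh (t + 1) - z t) := by abel
          rw [hdec]; exact sqnormPt_add_le _ _
        have hrhs : Tendsto (fun t : ℕ => 2 * sqnormPt (z (t + 1) - zh (t + 1))
            + 2 * sqnormPt (zh (t + 1) - z t)) atTop (𝓝 0) := by
          have := (hbts.const_mul 2).add (hat.const_mul 2)
          simpa using this
        have hsq : Tendsto (fun t : ℕ => sqnormPt (z (t + 1) - z t)) atTop (𝓝 0) :=
          squeeze_zero (fun t => sqnormPt_nonneg _) hbound hrhs
        have := hsq.sqrt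
        rw [Real.sqrt_zero] at this
        simpa [norm2Pt] using this
    | · -- goal 3 : ‖ẑ (t+1) − ẑ t‖ → 0
        have hbound : ∀ t : ℕ, sqnormPt (zh (t + 1) - zh t)
            ≤ 2 * sqnormPt (zh (t + 1) - z t) + 2 * sqnormPt (z t - zh t) := by
          intro t
          have hdec : zh (t + 1) - zh t = (zh (t + 1) - z t) + (z t - zh t) := by abel
          rw [hdec]; exact sqnormPt_add_le _ _
        have hrhs : Tendsto (fun t : ℕ => 2 * sqnormPt (zh (t + 1) - z t)
            + 2 * sqnormPt (z t - zh t)) atTop (𝓝 0) := by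
          have := (hat.const_mul 2).add (hbt.const_mul 2)
          simpa using this
        have hsq : Tendsto (fun t : ℕ => sqnormPt (zh (t + 1) - zh t)) atTop (𝓝 0) :=
          squeeze_zero (fun t => sqnormPt_nonneg _) hbound hrhs
        have := hsq.sqrt
        rw [Real.sqrt_zero] at this
        simpa [norm2Pt] using this
  }
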